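/- Let ℋ be a positive C¹ function on an open neighborhood O of the origin of ℝ³, let A: ℝ → ℝ∖{0} be a 2π-periodic C¹ nowhere-vanishing function, and let ψ: ℝ × (−R,R) → O be a C² map, 2π-periodic in u, satisfying ψ_uu + ψ_vv = 2 ℋ(ψ) ψ_u ×_L ψ_v, ψ(u,0) = 0 and ∂_vψ(u,0) = A(u)(cos u, −sin u, 1) for all u ∈ ℝ, and satisfying the conformality conditions ⟨ψ_u,ψ_u⟩_L = ⟨ψ_v,ψ_v⟩_L and ⟨ψ_u,ψ_v⟩_L = 0 everywhere. Then there exists R' ∈ (0,R] such that on ℝ × (0,R') one has ∂_uψ₁ ∂_vψ₂ − ∂_vψ₁ ∂_uψ₂ > 0 and ⟨ψ_u,ψ_u⟩_L > 0; in particular ψ restricted to ℝ × (0,R') is a spacelike immersion into 𝕃³ that is a local graph in the vertical direction. -/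

import Mathlib

noncomputable section

open Real Set Metric Filter MeasureTheory

/-- Points of Minkowski 3-space, as nested pairs. -/
abbrev R3 : Type := ℝ × ℝ × ℝ

/-- The Lorentzian inner product `⟨a,b⟩_L = a₁b₁ + a₂b₂ − a₃b₃` of Minkowski 3-space. -/
def lor (a b : R3) : ℝ := a.1 * b.1 + a.2.1 * b.2.1 - a.2.2 * b.2.2

/-- The Lorentzian cross product
`a ×_L b = (a₃b₂ − a₂b₃, a₁b₃ − a₃b₁, a₁b₂ − a₂b₁)`. -/
def lcross (a b : R3) : R3 :=
  (a.2.2 * b.2.1 - a.2.1 * b.2.2, a.1 * b.2.2 - a.2.2 * b.1, a.1 * b.2.1 - a.2.1 * b.1)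

/-- Partial derivative with respect to the first variable. -/
def pd1 {E : Type*} [NormedAddCommGroup E] [NormedSpace ℝ E]
    (f : ℝ × ℝ → E) (p : ℝ × ℝ) : E := fderiv ℝ f p (1, 0)

/-- Partial derivative with respect to the second variable. -/
def pd2 {E : Type*} [NormedAddCommGroup E] [NormedSpace ℝ E]
    (f : ℝ × ℝ → E) (p : ℝ × ℝ) : E := fderiv ℝ f p (0, 1)

def zx (z : ℝ × ℝ → ℝ) : ℝ × ℝ → ℝ := pd1 z
def zy (z : ℝ × ℝ → ℝ) : ℝ × ℝ → ℝ := pd2 z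
def zxx (z : ℝ × ℝ → ℝ) : ℝ × ℝ → ℝ := pd1 (zx z)
def zxy (z : ℝ × ℝ → ℝ) : ℝ × ℝ → ℝ := pd2 (zx z)
def zyy (z : ℝ × ℝ → ℝ) : ℝ × ℝ → ℝ := pd2 (zy z)

/-- Hessian determinant `z_xx z_yy − z_xy²`. -/
def hessDet (z : ℝ × ℝ → ℝ) (p : ℝ × ℝ) : ℝ := zxx z p * zyy z p - (zxy z p) ^ 2

/-- The punctured disk `{(x,y) : 0 < (x−x₀)² + (y−y₀)² < ρ²}`. -/
def PDisk (x₀ y₀ ρ : ℝ) : Set (ℝ × ℝ) :=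
  {p | 0 < (p.1 - x₀) ^ 2 + (p.2 - y₀) ^ 2 ∧ (p.1 - x₀) ^ 2 + (p.2 - y₀) ^ 2 < ρ ^ 2}

/-- `z` is an elliptic solution of the prescribed mean curvature equation for `H` on `U`,
with graph contained in `O`. -/
def IsEllSol (H : R3 → ℝ) (O : Set R3) (U : Set (ℝ × ℝ)) (z : ℝ × ℝ → ℝ) : Prop :=
  ContDiffOn ℝ 2 z U ∧
  (∀ p ∈ U, ((p.1, p.2, z p) : R3) ∈ O) ∧
  (∀ p ∈ U, (zx z p) ^ 2 + (zy z p) ^ 2 < 1) ∧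
  (∀ p ∈ U,
    (1 - (zy z p) ^ 2) * zxx z p + 2 * zx z p * zy z p * zxy z p
        + (1 - (zx z p) ^ 2) * zyy z p
      = 2 * H (p.1, p.2, z p) * (1 - (zx z p) ^ 2 - (zy z p) ^ 2) ^ ((3 : ℝ) / 2))

/-- The isolated singularity of `z` at `(x₀,y₀)` is removable: some `C²` function on a full
disk centered at `(x₀,y₀)` agrees with `z` on a punctured neighborhood. -/
def RemovableSing (x₀ y₀ : ℝ) (z : ℝ × ℝ → ℝ) : Prop :=
  ∃ ε > 0, ∃ Z : ℝ × ℝ → ℝ,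
    ContDiffOn ℝ 2 Z (ball ((x₀, y₀) : ℝ × ℝ) ε) ∧
    ∀ p ∈ ball ((x₀, y₀) : ℝ × ℝ) ε, p ≠ (x₀, y₀) → Z p = z p

/-- `H` is of class `C^{k,α}` on `O`: it is `C^k` and its `k`-th derivative is locally
`α`-Hölder on `O`. -/
def IsCkalpha (k : ℕ) (α : NNReal) (H : R3 → ℝ) (O : Set R3) : Prop :=
  ContDiffOn ℝ k H O ∧
  ∀ p ∈ O, ∃ ε > 0, ∃ C : NNReal,
    HolderOnWith C α (iteratedFDeriv ℝ k H) (ball p ε ∩ O)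

/-- The open strip `ℝ × (0,R)`. -/
def Strip (R : ℝ) : Set (ℝ × ℝ) := {p | 0 < p.2 ∧ p.2 < R}

/-- The open strip `ℝ × (−R,R)`. -/
def Strip2 (R : ℝ) : Set (ℝ × ℝ) := {p | -R < p.2 ∧ p.2 < R}

/-- The half-open strip `ℝ × [0,R)`. -/
def StripCl (R : ℝ) : Set (ℝ × ℝ) := {p | 0 ≤ p.2 ∧ p.2 < R}

/-- First two components of `ψ`: the planar projection `Π = (ψ₁, ψ₂)`. -/
def Pi2 (ψ : ℝ × ℝ → R3) (p : ℝ × ℝ) : ℝ × ℝ := ((ψ p).1, (ψ p).2.1)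

def comp1 (ψ : ℝ × ℝ → R3) : ℝ × ℝ → ℝ := fun p => (ψ p).1
def comp2 (ψ : ℝ × ℝ → R3) : ℝ × ℝ → ℝ := fun p => (ψ p).2.1
def comp3 (ψ : ℝ × ℝ → R3) : ℝ × ℝ → ℝ := fun p => (ψ p).2.2

/-- `ψ : ℝ × (0,R) → ℝ³` is a conformal parametrization of the graph of `z` near the
singularity `(x₀,y₀)`: it is 2π-periodic in `u`, its planar projection induces a
diffeomorphism with positive Jacobian from `(ℝ/2πℤ) × (0,R)` onto a punctured
neighborhood `W ⊆ Ω` of `(x₀,y₀)`, its third component is `z` of the first two, and the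
conformality conditions hold. -/
def IsConfParam (z : ℝ × ℝ → ℝ) (Ω : Set (ℝ × ℝ)) (x₀ y₀ R : ℝ)
    (ψ : ℝ × ℝ → R3) : Prop :=
  0 < R ∧
  ContDiffOn ℝ 1 ψ (Strip R) ∧
  (∀ u v : ℝ, ψ (u + 2 * π, v) = ψ (u, v)) ∧
  (∃ W : Set (ℝ × ℝ), W ⊆ Ω ∧ ((x₀, y₀) : ℝ × ℝ) ∉ W ∧
      insert ((x₀, y₀) : ℝ × ℝ) W ∈ nhds ((x₀, y₀) : ℝ × ℝ) ∧
      Pi2 ψ '' Strip R = W) ∧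
  (∀ p ∈ Strip R, ∀ q ∈ Strip R, Pi2 ψ p = Pi2 ψ q →
      p.2 = q.2 ∧ ∃ n : ℤ, p.1 - q.1 = 2 * π * n) ∧
  (∀ p ∈ Strip R,
      0 < pd1 (comp1 ψ) p * pd2 (comp2 ψ) p - pd2 (comp1 ψ) p * pd1 (comp2 ψ) p) ∧
  (∀ p ∈ Strip R, comp3 ψ p = z (Pi2 ψ p)) ∧
  (∀ p ∈ Strip R,
      lor (pd1 ψ p) (pd1 ψ p) = lor (pd2 ψ p) (pd2 ψ p) ∧
      0 < lor (pd1 ψ p) (pd1 ψ p) ∧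
      lor (pd1 ψ p) (pd2 ψ p) = 0)

/-- `ψ` extends real-analytically across `v = 0`, with `ψ(u,0) = p₀` and
`∂_vψ(u,0) = A(u)(cos u, −sin u, 1)`. -/
def ExtAnal (ψ : ℝ × ℝ → R3) (R : ℝ) (p₀ : R3) (A : ℝ → ℝ) : Prop :=
  ∃ ε > 0, ∃ Ψ : ℝ × ℝ → R3,
    AnalyticOnNhd ℝ Ψ {p : ℝ × ℝ | -ε < p.2 ∧ p.2 < R} ∧
    (∀ p ∈ Strip R, Ψ p = ψ p) ∧
    (∀ u : ℝ, Ψ (u, 0) = p₀) ∧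
    (∀ u : ℝ, pd2 Ψ (u, 0) = (A u * Real.cos u, -(A u * Real.sin u), A u))

/-- The class `𝒜₂` of 2π-periodic, real-analytic, nowhere vanishing functions. -/
def MemA2 (A : ℝ → ℝ) : Prop :=
  AnalyticOnNhd ℝ A univ ∧ (∀ u : ℝ, A (u + 2 * π) = A u) ∧ ∀ u : ℝ, A u ≠ 0

/-- The class `𝒜₁`: elliptic solutions on a punctured disk of radius `ρ` centered at
`(x₀,y₀)`, extending continuously with value `z₀`, whose Hessian determinant is
nonvanishing on a punctured neighborhood of `(x₀,y₀)`. -/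
def MemA1 (H : R3 → ℝ) (O : Set R3) (x₀ y₀ z₀ ρ : ℝ) (z : ℝ × ℝ → ℝ) : Prop :=
  0 < ρ ∧ IsEllSol H O (PDisk x₀ y₀ ρ) z ∧
  Tendsto z (nhdsWithin ((x₀, y₀) : ℝ × ℝ) (PDisk x₀ y₀ ρ)) (nhds z₀) ∧
  ∃ ε : ℝ, 0 < ε ∧ ε ≤ ρ ∧ ∀ p ∈ PDisk x₀ y₀ ε, hessDet z p ≠ 0

/-- `z` corresponds to `A`: some conformal parametrization of the graph of `z` near the
singularity extends real-analytically across `v = 0` with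
`∂_vψ(u,0) = A(u)(cos u, −sin u, 1)`. -/
def Corr (z : ℝ × ℝ → ℝ) (x₀ y₀ z₀ ρ : ℝ) (A : ℝ → ℝ) : Prop :=
  ∃ R : ℝ, ∃ ψ : ℝ × ℝ → R3,
    IsConfParam z (PDisk x₀ y₀ ρ) x₀ y₀ R ψ ∧ ExtAnal ψ R ((x₀, y₀, z₀) : R3) A

/-- The induced (first fundamental form) metric of the graph of `z`,
`ds² = (1−z_x²)dx² − 2 z_x z_y dx dy + (1−z_y²)dy²`, as a bilinear form. -/
def dsq (z : ℝ × ℝ → ℝ) (p : ℝ × ℝ) (ξ η : ℝ × ℝ) : ℝ :=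
  (1 - (zx z p) ^ 2) * ξ.1 * η.1 - zx z p * zy z p * (ξ.1 * η.2 + ξ.2 * η.1)
    + (1 - (zy z p) ^ 2) * ξ.2 * η.2

/-- `(Ω, ds²)` is conformally equivalent to the planar domain `D`: there is a `C¹`
diffeomorphism `Φ : Ω → D` and a positive function `λ` with
`⟨DΦ(ξ), DΦ(η)⟩_euc = λ · ds²(ξ,η)`. -/
def ConfEquiv (z : ℝ × ℝ → ℝ) (Ω D : Set (ℝ × ℝ)) : Prop :=
  ∃ (Φ : ℝ × ℝ → ℝ × ℝ) (Φinv : ℝ × ℝ → ℝ × ℝ) (lam : ℝ × ℝ → ℝ),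
    ContDiffOn ℝ 1 Φ Ω ∧ ContDiffOn ℝ 1 Φinv D ∧
    (∀ p ∈ Ω, Φ p ∈ D ∧ Φinv (Φ p) = p) ∧
    (∀ q ∈ D, Φinv q ∈ Ω ∧ Φ (Φinv q) = q) ∧
    (∀ p ∈ Ω, 0 < lam p ∧
      ∀ ξ η : ℝ × ℝ, (fderiv ℝ Φ p ξ).1 * (fderiv ℝ Φ p η).1
          + (fderiv ℝ Φ p ξ).2 * (fderiv ℝ Φ p η).2 = lam p * dsq z p ξ η)

section AuxStmt8

lemma isOpen_strip2 (R : ℝ) : IsOpen (Strip2 R) := by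
  have h : Strip2 R = Prod.snd ⁻¹' Ioo (-R) R := by
    ext p; simp [Strip2, mem_Ioo]
  rw [h]; exact isOpen_Ioo.preimage continuous_snd

lemma exists_reduce (u : ℝ) : ∃ n : ℤ, u - n * (2 * π) ∈ Icc (0 : ℝ) (2 * π) := by
  have h2π : (0 : ℝ) < 2 * π := by positivity
  exact ⟨⌊u / (2 * π)⌋, Int.sub_floor_div_mul_nonneg u h2π,
    le_of_lt (Int.sub_floor_div_mul_lt u h2π)⟩

lemma fderiv_clm_comp_apply' {E F G : Type*} [NormedAddCommGroup E] [NormedSpace ℝ E]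
    [NormedAddCommGroup F] [NormedSpace ℝ F] [NormedAddCommGroup G] [NormedSpace ℝ G]
    (L : F →L[ℝ] G) {f : E → F} {p : E} (hf : DifferentiableAt ℝ f p) (w : E) :
    fderiv ℝ (fun q => L (f q)) p w = L (fderiv ℝ f p w) := by
  rw [show (fun q => L (f q)) = (L ∘ f) from rfl, fderiv_comp p L.differentiableAt hf,
    ContinuousLinearMap.fderiv]
  rfl

lemma hasDerivAt_shift {E F : Type*} [NormedAddCommGroup E] [NormedSpace ℝ E]
    [NormedAddCommGroup F] [NormedSpace ℝ F] (f : E → F) (c : E)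
    (hf : ∀ x, f (x + c) = f x) (y : E) (h : DifferentiableAt ℝ f (y + c)) :
    HasFDerivAt f (fderiv ℝ f (y + c)) y := by
  have hline : HasFDerivAt (fun z : E => z + c) (ContinuousLinearMap.id ℝ E) y := by
    simpa using (hasFDerivAt_id y).add_const c
  have h2 := h.hasFDerivAt.comp y hline
  rw [ContinuousLinearMap.comp_id] at h2
  have hfc : (f ∘ fun z : E => z + c) = f := funext hf
  rwa [hfc] at h2

lemma fderiv_shift {E F : Type*} [NormedAddCommGroup E] [NormedSpace ℝ E]
    [NormedAddCommGroup F] [NormedSpace ℝ F] (f : E → F) (c : E)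
    (hf : ∀ x, f (x + c) = f x) (x : E) : fderiv ℝ f (x + c) = fderiv ℝ f x := by
  have hf' : ∀ z, f (z + -c) = f z := by
    intro z
    have := hf (z + -c)
    rw [add_assoc, neg_add_cancel, add_zero] at this
    exact this.symm
  by_cases h : DifferentiableAt ℝ f (x + c)
  · exact ((hasDerivAt_shift f c hf x h).fderiv).symm
  · have h' : ¬ DifferentiableAt ℝ f x := by
      intro h'
      apply h
      have h'' : DifferentiableAt ℝ f ((x + c) + -c) := by
        rw [add_assoc, add_neg_cancel, add_zero]; exact h'
      exact (hasDerivAt_shift f (-c) hf' (x + c) h'').differentiableAt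
    rw [fderiv_zero_of_not_differentiableAt h, fderiv_zero_of_not_differentiableAt h']

lemma vert_hasDerivAt {E : Type*} [NormedAddCommGroup E] [NormedSpace ℝ E]
    (f : ℝ × ℝ → E) (u t : ℝ) (hf : DifferentiableAt ℝ f (u, t)) :
    HasDerivAt (fun s => f (u, s)) (pd2 f (u, t)) t := by
  have hline : HasDerivAt (fun s : ℝ => ((u, s) : ℝ × ℝ)) ((0 : ℝ), (1 : ℝ)) t :=
    (hasDerivAt_const t u).prodMk (hasDerivAt_id t)
  have := hf.hasFDerivAt.comp_hasDerivAt t hline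
  exact this

lemma horiz_hasDerivAt {E : Type*} [NormedAddCommGroup E] [NormedSpace ℝ E]
    (f : ℝ × ℝ → E) (u t : ℝ) (hf : DifferentiableAt ℝ f (u, t)) :
    HasDerivAt (fun s => f (s, t)) (pd1 f (u, t)) u := by
  have hline : HasDerivAt (fun s : ℝ => ((s, t) : ℝ × ℝ)) ((1 : ℝ), (0 : ℝ)) u :=
    (hasDerivAt_id u).prodMk (hasDerivAt_const u t)
  have := hf.hasFDerivAt.comp_hasDerivAt u hline
  exact this

lemma unif_small {R : ℝ} (hR : 0 < R) {E : Type*} [NormedAddCommGroup E]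
    (g : ℝ × ℝ → E) (hg : ContinuousOn g (Strip2 R))
    (hper : ∀ p : ℝ × ℝ, g (p.1 + 2 * π, p.2) = g p)
    {ε : ℝ} (hε : 0 < ε) :
    ∃ δ : ℝ, 0 < δ ∧ δ < R ∧ ∀ u t : ℝ, |t| ≤ δ → ‖g (u, t) - g (u, 0)‖ ≤ ε := by
  have hπ : (0 : ℝ) < 2 * π := by positivity
  set C : Set (ℝ × ℝ) := Icc (0 : ℝ) (2 * π) ×ˢ Icc (-(R / 2)) (R / 2) with hC
  have hCcpt : IsCompact C := isCompact_Icc.prod isCompact_Icc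
  have hCsub : C ⊆ Strip2 R := by
    rintro ⟨u, t⟩ ⟨hu, ht⟩
    simp only [mem_Icc] at ht
    exact ⟨by linarith [ht.1], by linarith [ht.2]⟩
  have huc := hCcpt.uniformContinuousOn_of_continuous (hg.mono hCsub)
  rw [Metric.uniformContinuousOn_iff] at huc
  obtain ⟨δ₀, hδ₀, hδ⟩ := huc ε hε
  refine ⟨min (δ₀ / 2) (R / 2), by positivity,
    lt_of_le_of_lt (min_le_right _ _) (by linarith), ?_⟩
  intro u t ht
  obtain ⟨n, hn⟩ := exists_reduce u
  set u' := u - n * (2 * π) with hu'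
  have habs := abs_le.1 (le_trans ht (min_le_right _ _))
  have h1 : ((u', t) : ℝ × ℝ) ∈ C := ⟨hn, mem_Icc.2 ⟨by linarith [habs.1], by linarith [habs.2]⟩⟩
  have h2 : ((u', 0) : ℝ × ℝ) ∈ C := ⟨hn, mem_Icc.2 ⟨by linarith, by linarith⟩⟩
  have hdist : dist ((u', t) : ℝ × ℝ) ((u', 0) : ℝ × ℝ) < δ₀ := by
    rw [Prod.dist_eq]
    simp [Real.dist_eq]
    calc |t| ≤ min (δ₀ / 2) (R / 2) := ht
    _ ≤ δ₀ / 2 := min_le_left _ _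
    _ < δ₀ := by linarith
  have hpg : Function.Periodic (fun s => g (s, t)) (2 * π) := fun s => hper (s, t)
  have hpg0 : Function.Periodic (fun s => g (s, 0)) (2 * π) := fun s => hper (s, 0)
  have e1 : g (u', t) = g (u, t) := hpg.sub_int_mul_eq n
  have e2 : g (u', 0) = g (u, 0) := hpg0.sub_int_mul_eq n
  have := hδ _ h1 _ h2 hdist
  rw [dist_eq_norm] at this
  rw [← e1, ← e2]
  exact le_of_lt this

lemma periodic_bound {E : Type*} [NormedAddCommGroup E] (f : ℝ → E)
    (hf : ContinuousOn f (Icc 0 (2 * π))) (hp : Function.Periodic f (2 * π)) :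
    ∃ M : ℝ, 1 ≤ M ∧ ∀ u, ‖f u‖ ≤ M := by
  obtain ⟨Cb, hCb⟩ := isCompact_Icc.exists_bound_of_continuousOn hf
  refine ⟨max 1 Cb, le_max_left _ _, fun u => ?_⟩
  obtain ⟨n, hn⟩ := exists_reduce u
  calc ‖f u‖ = ‖f (u - n * (2 * π))‖ := by rw [hp.sub_int_mul_eq]
  _ ≤ Cb := hCb _ hn
  _ ≤ max 1 Cb := le_max_right _ _

lemma comp_le_norm (x : R3) : |x.1| ≤ ‖x‖ ∧ |x.2.1| ≤ ‖x‖ ∧ |x.2.2| ≤ ‖x‖ := by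
  refine ⟨?_, ?_, ?_⟩
  · simpa [Real.norm_eq_abs] using norm_fst_le x
  · simpa [Real.norm_eq_abs] using le_trans (norm_fst_le x.2) (norm_snd_le x)
  · simpa [Real.norm_eq_abs] using le_trans (norm_snd_le x.2) (norm_snd_le x)

end AuxStmt8

/-- Claim 2 in Theorem `existence`: shrinking `R` if necessary, the
solution of the Cauchy problem with initial null curve `A(u)(cos u, −sin u, 1)` is, on
`ℝ × (0,R')`, a spacelike immersion which is a local graph in the vertical direction. -/
theorem stmt8 (O : Set R3) (R : ℝ) (H : R3 → ℝ) (A : ℝ → ℝ) (ψ : ℝ × ℝ → R3)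
    (hR : 0 < R) (hO : IsOpen O) (h0O : ((0, 0, 0) : R3) ∈ O)
    (hH : ContDiffOn ℝ 1 H O) (hHpos : ∀ p ∈ O, 0 < H p)
    (hA : ContDiff ℝ 1 A) (hAper : ∀ u : ℝ, A (u + 2 * π) = A u)
    (hA0 : ∀ u : ℝ, A u ≠ 0)
    (hψO : ∀ p ∈ Strip2 R, ψ p ∈ O)
    (hψ : ContDiffOn ℝ 2 ψ (Strip2 R))
    (hper : ∀ u v : ℝ, ψ (u + 2 * π, v) = ψ (u, v))
    (hsys : ∀ p ∈ Strip2 R,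
      pd1 (pd1 ψ) p + pd2 (pd2 ψ) p = (2 * H (ψ p)) • lcross (pd1 ψ p) (pd2 ψ p))
    (h0 : ∀ u : ℝ, ψ (u, 0) = (0 : R3))
    (hbv : ∀ u : ℝ, pd2 ψ (u, 0) = (A u * Real.cos u, -(A u * Real.sin u), A u))
    (hconf : ∀ p ∈ Strip2 R,
      lor (pd1 ψ p) (pd1 ψ p) = lor (pd2 ψ p) (pd2 ψ p) ∧
      lor (pd1 ψ p) (pd2 ψ p) = 0) :
    ∃ R' : ℝ, 0 < R' ∧ R' ≤ R ∧ ∀ p ∈ Strip R',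
      0 < pd1 (comp1 ψ) p * pd2 (comp2 ψ) p - pd2 (comp1 ψ) p * pd1 (comp2 ψ) p ∧
      0 < lor (pd1 ψ p) (pd1 ψ p) := by
  have hπ : (0 : ℝ) < π := Real.pi_pos
  have hSopen : IsOpen (Strip2 R) := isOpen_strip2 R
  have hψd : ∀ p ∈ Strip2 R, DifferentiableAt ℝ ψ p := fun p hp =>
    (hψ.differentiableOn (by norm_num)).differentiableAt (hSopen.mem_nhds hp)
  have hF2 : ContDiffOn ℝ 1 (fderiv ℝ ψ) (Strip2 R) := hψ.fderiv_of_isOpen hSopen (by norm_num)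
  have hF2d : ∀ p ∈ Strip2 R, DifferentiableAt ℝ (fderiv ℝ ψ) p := fun p hp =>
    (hF2.differentiableOn one_ne_zero).differentiableAt (hSopen.mem_nhds hp)
  have hG1 : ContDiffOn ℝ 1 (pd1 ψ) (Strip2 R) := by
    unfold pd1
    exact (ContinuousLinearMap.apply ℝ R3 ((1 : ℝ), (0 : ℝ))).contDiff.comp_contDiffOn hF2
  have hG1d : ∀ p ∈ Strip2 R, DifferentiableAt ℝ (pd1 ψ) p := fun p hp =>
    (hG1.differentiableOn one_ne_zero).differentiableAt (hSopen.mem_nhds hp)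
  have hFd : ∀ p ∈ Strip2 R, DifferentiableAt ℝ (pd2 ψ) p := by
    intro p hp
    exact (ContinuousLinearMap.apply ℝ R3 ((0 : ℝ), (1 : ℝ))).differentiableAt.comp p (hF2d p hp)
  have hFc : ContinuousOn (pd2 ψ) (Strip2 R) := by
    unfold pd2
    exact (ContinuousLinearMap.apply ℝ R3 ((0 : ℝ), (1 : ℝ))).continuous.comp_continuousOn
      hF2.continuousOn
  have hG2c : ContinuousOn (fun p => pd2 (pd1 ψ) p) (Strip2 R) := by
    have h1 : ContDiffOn ℝ 0 (fderiv ℝ (pd1 ψ)) (Strip2 R) :=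
      hG1.fderiv_of_isOpen hSopen (by norm_num)
    unfold pd2
    exact (ContinuousLinearMap.apply ℝ R3 ((0 : ℝ), (1 : ℝ))).continuous.comp_continuousOn
      h1.continuousOn
  -- Clairaut symmetry
  have hsymm : ∀ p ∈ Strip2 R, pd2 (pd1 ψ) p = pd1 (pd2 ψ) p := by
    intro p hp
    have hsy := (hψ.contDiffAt (hSopen.mem_nhds hp)).isSymmSndFDerivAt (by simp [minSmoothness_of_isRCLikeNormedField])
    have e1 : pd2 (pd1 ψ) p = fderiv ℝ (fderiv ℝ ψ) p (0, 1) (1, 0) := by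
      unfold pd2 pd1
      exact fderiv_clm_comp_apply' (ContinuousLinearMap.apply ℝ R3 ((1 : ℝ), (0 : ℝ)))
        (hF2d p hp) (0, 1)
    have e2 : pd1 (pd2 ψ) p = fderiv ℝ (fderiv ℝ ψ) p (1, 0) (0, 1) := by
      unfold pd1 pd2
      exact fderiv_clm_comp_apply' (ContinuousLinearMap.apply ℝ R3 ((0 : ℝ), (1 : ℝ)))
        (hF2d p hp) (1, 0)
    rw [e1, e2, hsy]
  -- periodicity of the derivatives
  have hshift : ∀ p : ℝ × ℝ, ψ (p + ((2 * π : ℝ), (0 : ℝ))) = ψ p := by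
    rintro ⟨u, v⟩
    show ψ (u + 2 * π, v + 0) = ψ (u, v)
    rw [add_zero]; exact hper u v
  have hfdper : ∀ p : ℝ × ℝ, fderiv ℝ ψ (p + ((2 * π : ℝ), (0 : ℝ))) = fderiv ℝ ψ p :=
    fderiv_shift ψ _ hshift
  have hGshift : ∀ p : ℝ × ℝ, pd1 ψ (p + ((2 * π : ℝ), (0 : ℝ))) = pd1 ψ p := by
    intro p; unfold pd1; rw [hfdper]
  have hFper : ∀ p : ℝ × ℝ, pd2 ψ (p.1 + 2 * π, p.2) = pd2 ψ p := by
    rintro ⟨u, v⟩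
    have heq : ((u + 2 * π, v) : ℝ × ℝ) = (u, v) + ((2 * π : ℝ), (0 : ℝ)) := by
      show _ = ((u + 2 * π, v + 0) : ℝ × ℝ); rw [add_zero]
    rw [heq]; unfold pd2; rw [hfdper]
  have hG2per : ∀ p : ℝ × ℝ, pd2 (pd1 ψ) (p.1 + 2 * π, p.2) = pd2 (pd1 ψ) p := by
    rintro ⟨u, v⟩
    have heq : ((u + 2 * π, v) : ℝ × ℝ) = (u, v) + ((2 * π : ℝ), (0 : ℝ)) := by
      show _ = ((u + 2 * π, v + 0) : ℝ × ℝ); rw [add_zero]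
    rw [heq]
    show fderiv ℝ (pd1 ψ) _ (0, 1) = fderiv ℝ (pd1 ψ) _ (0, 1)
    rw [fderiv_shift (pd1 ψ) _ hGshift]
  have hmem0 : ∀ u : ℝ, ((u, 0) : ℝ × ℝ) ∈ Strip2 R :=
    fun u => ⟨show -R < (0 : ℝ) by linarith, show (0 : ℝ) < R from hR⟩
  -- ψ_u(u,0) = 0
  have hG0 : ∀ u : ℝ, pd1 ψ (u, 0) = 0 := by
    intro u
    have hd := horiz_hasDerivAt ψ u 0 (hψd _ (hmem0 u))
    have hcst : (fun s => ψ (s, 0)) = fun _ => (0 : R3) := funext h0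
    rw [hcst] at hd
    exact hd.unique (hasDerivAt_const u 0)
  -- value of B(u) = ∂_v ψ_u (u,0)
  have hAd : Differentiable ℝ A := hA.differentiable one_ne_zero
  have hB : ∀ u : ℝ, pd2 (pd1 ψ) (u, 0)
      = ((deriv A u * Real.cos u - A u * Real.sin u,
          -(deriv A u * Real.sin u + A u * Real.cos u), deriv A u) : R3) := by
    intro u
    rw [hsymm _ (hmem0 u)]
    have hd := horiz_hasDerivAt (pd2 ψ) u 0 (hFd _ (hmem0 u))
    have hcurve : (fun s => pd2 ψ (s, 0))
        = fun s => ((A s * Real.cos s, -(A s * Real.sin s), A s) : R3) := funext hbv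
    rw [hcurve] at hd
    have h1 : HasDerivAt (fun s => A s * Real.cos s)
        (deriv A u * Real.cos u - A u * Real.sin u) u := by
      have h := (hAd u).hasDerivAt.mul (Real.hasDerivAt_cos u)
      have e : deriv A u * Real.cos u - A u * Real.sin u
          = deriv A u * Real.cos u + A u * -Real.sin u := by ring
      rw [e]; exact h
    have h2 : HasDerivAt (fun s => -(A s * Real.sin s))
        (-(deriv A u * Real.sin u + A u * Real.cos u)) u :=
      ((hAd u).hasDerivAt.mul (Real.hasDerivAt_sin u)).neg
    have h3 : HasDerivAt A (deriv A u) u := (hAd u).hasDerivAt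
    exact hd.unique (h1.prodMk (h2.prodMk h3))
  -- bounds M
  have hBcont : ContinuousOn (fun u : ℝ => pd2 (pd1 ψ) (u, 0)) (Icc 0 (2 * π)) :=
    hG2c.comp ((continuous_id.prodMk continuous_const).continuousOn) (fun u _ => hmem0 u)
  obtain ⟨M₁, hM₁1, hM₁⟩ := periodic_bound (fun u => pd2 (pd1 ψ) (u, 0)) hBcont
    (fun u => hG2per (u, 0))
  have hF0cont : ContinuousOn (fun u : ℝ => pd2 ψ (u, 0)) (Icc 0 (2 * π)) :=
    hFc.comp ((continuous_id.prodMk continuous_const).continuousOn) (fun u _ => hmem0 u)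
  obtain ⟨M₂, hM₂1, hM₂⟩ := periodic_bound (fun u => pd2 ψ (u, 0)) hF0cont
    (fun u => hFper (u, 0))
  set M := max M₁ M₂ with hMdef
  have hM1 : 1 ≤ M := le_trans hM₁1 (le_max_left _ _)
  have hBM : ∀ u : ℝ, ‖pd2 (pd1 ψ) (u, 0)‖ ≤ M := fun u =>
    le_trans (hM₁ u) (le_max_left _ _)
  have hFM : ∀ u : ℝ, ‖pd2 ψ (u, 0)‖ ≤ M := fun u =>
    le_trans (hM₂ u) (le_max_right _ _)
  -- lower bound m for A²
  obtain ⟨u₀, hu₀mem, hu₀min⟩ :=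
    (isCompact_Icc : IsCompact (Icc (0 : ℝ) (2 * π))).exists_isMinOn
      (nonempty_Icc.2 (by positivity)) ((hA.continuous.pow 2).continuousOn)
  set m := A u₀ ^ 2 with hmdef
  have hm0 : 0 < m := by have := hA0 u₀; positivity
  have hm : ∀ u : ℝ, m ≤ A u ^ 2 := by
    intro u
    obtain ⟨n, hn⟩ := exists_reduce u
    have hpA : Function.Periodic (fun s => A s ^ 2) (2 * π) := fun s => by
      simp [hAper s]
    calc m ≤ A (u - n * (2 * π)) ^ 2 := isMinOn_iff.1 hu₀min _ hn
    _ = A u ^ 2 := hpA.sub_int_mul_eq n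
  -- choose ε and δ
  set ε := min 1 (m / (6 * M + 4)) with hεdef
  have h64 : (0 : ℝ) < 6 * M + 4 := by linarith
  have hε0 : 0 < ε := lt_min one_pos (by positivity)
  have hε1 : ε ≤ 1 := min_le_left _ _
  have hεm : ε * (6 * M + 4) ≤ m := by
    calc ε * (6 * M + 4) ≤ (m / (6 * M + 4)) * (6 * M + 4) :=
      mul_le_mul_of_nonneg_right (min_le_right _ _) h64.le
    _ = m := div_mul_cancel₀ m (ne_of_gt h64)
  obtain ⟨δ₁, hδ₁0, hδ₁R, hδ₁⟩ := unif_small hR (fun p => pd2 (pd1 ψ) p) hG2c hG2per hε0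
  obtain ⟨δ₂, hδ₂0, hδ₂R, hδ₂⟩ := unif_small hR (pd2 ψ) hFc hFper hε0
  refine ⟨min 1 (min δ₁ δ₂), by positivity, ?_, ?_⟩
  · calc min 1 (min δ₁ δ₂) ≤ min δ₁ δ₂ := min_le_right _ _
    _ ≤ δ₁ := min_le_left _ _
    _ ≤ R := le_of_lt hδ₁R
  rintro ⟨u, v⟩ hp
  obtain ⟨hv0, hvR'⟩ := hp
  simp only at hv0 hvR'
  have hv1 : v ≤ 1 := le_of_lt (lt_of_lt_of_le hvR' (min_le_left _ _))
  have hvδ₁ : v ≤ δ₁ :=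
    le_of_lt (lt_of_lt_of_le hvR' (le_trans (min_le_right _ _) (min_le_left _ _)))
  have hvδ₂ : v ≤ δ₂ :=
    le_of_lt (lt_of_lt_of_le hvR' (le_trans (min_le_right _ _) (min_le_right _ _)))
  have hvR : v < R := lt_of_le_of_lt hvδ₁ hδ₁R
  have hpS : ((u, v) : ℝ × ℝ) ∈ Strip2 R := ⟨by linarith, hvR⟩
  -- mean value estimate on ψ_u
  have key1 : ‖pd1 ψ (u, v) - v • pd2 (pd1 ψ) (u, 0)‖ ≤ ε * v := by
    have hder : ∀ t ∈ Icc (0 : ℝ) v,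
        HasDerivWithinAt (fun t => pd1 ψ (u, t) - t • pd2 (pd1 ψ) (u, 0))
          (pd2 (pd1 ψ) (u, t) - pd2 (pd1 ψ) (u, 0)) (Icc 0 v) t := by
      intro t ht
      have hmem : ((u, t) : ℝ × ℝ) ∈ Strip2 R := ⟨by linarith [ht.1], by linarith [ht.2]⟩
      have h1 := vert_hasDerivAt (pd1 ψ) u t (hG1d _ hmem)
      have h2 : HasDerivAt (fun t : ℝ => t • pd2 (pd1 ψ) (u, 0)) (pd2 (pd1 ψ) (u, 0)) t := by
        simpa using (hasDerivAt_id t).smul_const (pd2 (pd1 ψ) (u, 0))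
      exact (h1.sub h2).hasDerivWithinAt
    have hbound : ∀ t ∈ Icc (0 : ℝ) v, ‖pd2 (pd1 ψ) (u, t) - pd2 (pd1 ψ) (u, 0)‖ ≤ ε := by
      intro t ht
      exact hδ₁ u t (by rw [abs_of_nonneg ht.1]; exact le_trans ht.2 hvδ₁)
    have hmvt := (convex_Icc (0 : ℝ) v).norm_image_sub_le_of_norm_hasDerivWithin_le hder hbound
      (left_mem_Icc.2 hv0.le) (right_mem_Icc.2 hv0.le)
    simpa [hG0 u, Real.norm_eq_abs, abs_of_pos hv0] using hmvt
  have key2 : ‖pd2 ψ (u, v) - pd2 ψ (u, 0)‖ ≤ ε :=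
    hδ₂ u v (by rw [abs_of_pos hv0]; exact hvδ₂)
  -- scalar bounds
  have hr := comp_le_norm (pd1 ψ (u, v) - v • pd2 (pd1 ψ) (u, 0))
  have hr1 : |(pd1 ψ (u, v)).1 - v * (pd2 (pd1 ψ) (u, 0)).1| ≤ ε * v := by
    simpa [Prod.fst_sub, Prod.smul_fst, smul_eq_mul] using hr.1.trans key1
  have hr2 : |(pd1 ψ (u, v)).2.1 - v * (pd2 (pd1 ψ) (u, 0)).2.1| ≤ ε * v := by
    simpa [Prod.snd_sub, Prod.fst_sub, Prod.smul_snd, Prod.smul_fst, smul_eq_mul]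
      using hr.2.1.trans key1
  have hr3 : |(pd1 ψ (u, v)).2.2 - v * (pd2 (pd1 ψ) (u, 0)).2.2| ≤ ε * v := by
    simpa [Prod.snd_sub, Prod.smul_snd, smul_eq_mul] using hr.2.2.trans key1
  have hs := comp_le_norm (pd2 ψ (u, v) - pd2 ψ (u, 0))
  have hs1 : |(pd2 ψ (u, v)).1 - (pd2 ψ (u, 0)).1| ≤ ε := by
    simpa [Prod.fst_sub] using hs.1.trans key2
  have hs2 : |(pd2 ψ (u, v)).2.1 - (pd2 ψ (u, 0)).2.1| ≤ ε := by
    simpa [Prod.snd_sub, Prod.fst_sub] using hs.2.1.trans key2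
  have hb1 : |(pd2 (pd1 ψ) (u, 0)).1| ≤ M :=
    le_trans (comp_le_norm _).1 (hBM u)
  have hb2 : |(pd2 (pd1 ψ) (u, 0)).2.1| ≤ M :=
    le_trans (comp_le_norm _).2.1 (hBM u)
  have hb3 : |(pd2 (pd1 ψ) (u, 0)).2.2| ≤ M :=
    le_trans (comp_le_norm _).2.2 (hBM u)
  have hφ1 : |(pd2 ψ (u, 0)).1| ≤ M := le_trans (comp_le_norm _).1 (hFM u)
  have hφ2 : |(pd2 ψ (u, 0)).2.1| ≤ M := le_trans (comp_le_norm _).2.1 (hFM u)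
  -- explicit values
  have hb1v : (pd2 (pd1 ψ) (u, 0)).1 = deriv A u * Real.cos u - A u * Real.sin u := by
    rw [hB u]
  have hb2v : (pd2 (pd1 ψ) (u, 0)).2.1 = -(deriv A u * Real.sin u + A u * Real.cos u) := by
    rw [hB u]
  have hb3v : (pd2 (pd1 ψ) (u, 0)).2.2 = deriv A u := by rw [hB u]
  have hφ1v : (pd2 ψ (u, 0)).1 = A u * Real.cos u := by rw [hbv u]
  have hφ2v : (pd2 ψ (u, 0)).2.1 = -(A u * Real.sin u) := by rw [hbv u]
  have hsc : Real.sin u ^ 2 + Real.cos u ^ 2 = 1 := Real.sin_sq_add_cos_sq u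
  have hjval : (pd2 (pd1 ψ) (u, 0)).1 * (pd2 ψ (u, 0)).2.1
      - (pd2 ψ (u, 0)).1 * (pd2 (pd1 ψ) (u, 0)).2.1 = A u ^ 2 := by
    rw [hb1v, hb2v, hφ1v, hφ2v]
    linear_combination A u ^ 2 * hsc
  have hlval : (pd2 (pd1 ψ) (u, 0)).1 ^ 2 + (pd2 (pd1 ψ) (u, 0)).2.1 ^ 2
      - (pd2 (pd1 ψ) (u, 0)).2.2 ^ 2 = A u ^ 2 := by
    rw [hb1v, hb2v, hb3v]
    linear_combination (deriv A u ^ 2 + A u ^ 2) * hsc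
  have hmu : m ≤ A u ^ 2 := hm u
  have hεm' : ε * (4 * M + 2) < m := by
    have h1 : ε * (4 * M + 2) < ε * (6 * M + 4) :=
      mul_lt_mul_of_pos_left (by linarith) hε0
    linarith
  have hεm'' : ε * (6 * M + 3) < m := by
    have h1 : ε * (6 * M + 3) < ε * (6 * M + 4) :=
      mul_lt_mul_of_pos_left (by linarith) hε0
    linarith
  -- bounds on |g_i|, |f_i|
  have hg2a : |(pd1 ψ (u, v)).2.1| ≤ v * (M + 1) := by
    have h1 := abs_le.1 hr2
    have h2 := abs_le.1 hb2
    rw [abs_le]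
    constructor <;> linarith [mul_le_mul_of_nonneg_left h2.1 hv0.le,
      mul_le_mul_of_nonneg_left h2.2 hv0.le, mul_le_mul_of_nonneg_right hε1 hv0.le,
      h1.1, h1.2]
  have hf2a : |(pd2 ψ (u, v)).2.1| ≤ M + 1 := by
    have h1 := abs_le.1 hs2
    have h2 := abs_le.1 hφ2
    rw [abs_le]
    constructor <;> linarith [h1.1, h1.2, h2.1, h2.2, hε1]
  have hga : ∀ (g b : ℝ), |g - v * b| ≤ ε * v → |b| ≤ M → |g + v * b| ≤ v * (2 * M + 1) := by
    intro g b h1 h2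
    have h1' := abs_le.1 h1
    have h2' := abs_le.1 h2
    rw [abs_le]
    constructor <;> linarith [mul_le_mul_of_nonneg_left h2'.1 hv0.le,
      mul_le_mul_of_nonneg_left h2'.2 hv0.le, mul_le_mul_of_nonneg_right hε1 hv0.le,
      h1'.1, h1'.2]
  have hga1 := hga _ _ hr1 hb1
  have hga2 := hga _ _ hr2 hb2
  have hga3 := hga _ _ hr3 hb3
  constructor
  · -- Jacobian positivity
    have hc11 : pd1 (comp1 ψ) ((u, v) : ℝ × ℝ) = (pd1 ψ (u, v)).1 := by
      unfold pd1 comp1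
      exact fderiv_clm_comp_apply' (ContinuousLinearMap.fst ℝ ℝ (ℝ × ℝ)) (hψd _ hpS) (1, 0)
    have hc21 : pd2 (comp1 ψ) ((u, v) : ℝ × ℝ) = (pd2 ψ (u, v)).1 := by
      unfold pd2 comp1
      exact fderiv_clm_comp_apply' (ContinuousLinearMap.fst ℝ ℝ (ℝ × ℝ)) (hψd _ hpS) (0, 1)
    have hc12 : pd1 (comp2 ψ) ((u, v) : ℝ × ℝ) = (pd1 ψ (u, v)).2.1 := by
      unfold pd1 comp2
      exact fderiv_clm_comp_apply'
        ((ContinuousLinearMap.fst ℝ ℝ ℝ).comp (ContinuousLinearMap.snd ℝ ℝ (ℝ × ℝ)))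
        (hψd _ hpS) (1, 0)
    have hc22 : pd2 (comp2 ψ) ((u, v) : ℝ × ℝ) = (pd2 ψ (u, v)).2.1 := by
      unfold pd2 comp2
      exact fderiv_clm_comp_apply'
        ((ContinuousLinearMap.fst ℝ ℝ ℝ).comp (ContinuousLinearMap.snd ℝ ℝ (ℝ × ℝ)))
        (hψd _ hpS) (0, 1)
    rw [hc11, hc22, hc21, hc12]
    have hdecomp : (pd1 ψ (u, v)).1 * (pd2 ψ (u, v)).2.1
        - (pd2 ψ (u, v)).1 * (pd1 ψ (u, v)).2.1
      = v * ((pd2 (pd1 ψ) (u, 0)).1 * (pd2 ψ (u, 0)).2.1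
          - (pd2 ψ (u, 0)).1 * (pd2 (pd1 ψ) (u, 0)).2.1)
        + (((pd1 ψ (u, v)).1 - v * (pd2 (pd1 ψ) (u, 0)).1) * (pd2 ψ (u, v)).2.1
          + (v * (pd2 (pd1 ψ) (u, 0)).1) * ((pd2 ψ (u, v)).2.1 - (pd2 ψ (u, 0)).2.1)
          - ((pd2 ψ (u, v)).1 - (pd2 ψ (u, 0)).1) * (pd1 ψ (u, v)).2.1
          - (pd2 ψ (u, 0)).1 * ((pd1 ψ (u, v)).2.1 - v * (pd2 (pd1 ψ) (u, 0)).2.1)) := by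
      ring
    rw [hdecomp, hjval]
    have t1 : |((pd1 ψ (u, v)).1 - v * (pd2 (pd1 ψ) (u, 0)).1) * (pd2 ψ (u, v)).2.1|
        ≤ (ε * v) * (M + 1) := by
      rw [abs_mul]
      exact mul_le_mul hr1 hf2a (abs_nonneg _) (by positivity)
    have t2 : |(v * (pd2 (pd1 ψ) (u, 0)).1) * ((pd2 ψ (u, v)).2.1 - (pd2 ψ (u, 0)).2.1)|
        ≤ (v * M) * ε := by
      rw [abs_mul, abs_mul, abs_of_pos hv0]
      exact mul_le_mul (mul_le_mul_of_nonneg_left hb1 hv0.le) hs2 (abs_nonneg _)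
        (by positivity)
    have t3 : |((pd2 ψ (u, v)).1 - (pd2 ψ (u, 0)).1) * (pd1 ψ (u, v)).2.1|
        ≤ ε * (v * (M + 1)) := by
      rw [abs_mul]
      exact mul_le_mul hs1 hg2a (abs_nonneg _) hε0.le
    have t4 : |(pd2 ψ (u, 0)).1 * ((pd1 ψ (u, v)).2.1 - v * (pd2 (pd1 ψ) (u, 0)).2.1)|
        ≤ M * (ε * v) := by
      rw [abs_mul]
      exact mul_le_mul hφ1 hr2 (abs_nonneg _) (by linarith)
    have hsum : (ε * v) * (M + 1) + (v * M) * ε + ε * (v * (M + 1)) + M * (ε * v)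
        = v * (ε * (4 * M + 2)) := by ring
    have hpos : v * (ε * (4 * M + 2)) < v * m := mul_lt_mul_of_pos_left hεm' hv0
    have hvA : v * m ≤ v * A u ^ 2 := mul_le_mul_of_nonneg_left hmu hv0.le
    have e1 := (abs_le.1 t1).1
    have e2 := (abs_le.1 t2).1
    have e3 := (abs_le.1 t3).2
    have e4 := (abs_le.1 t4).2
    linarith
  · -- ⟨ψ_u, ψ_u⟩_L positivity
    show (0 : ℝ) < (pd1 ψ (u, v)).1 * (pd1 ψ (u, v)).1
      + (pd1 ψ (u, v)).2.1 * (pd1 ψ (u, v)).2.1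
      - (pd1 ψ (u, v)).2.2 * (pd1 ψ (u, v)).2.2
    have hdecomp2 : (pd1 ψ (u, v)).1 * (pd1 ψ (u, v)).1
        + (pd1 ψ (u, v)).2.1 * (pd1 ψ (u, v)).2.1
        - (pd1 ψ (u, v)).2.2 * (pd1 ψ (u, v)).2.2
      = v ^ 2 * ((pd2 (pd1 ψ) (u, 0)).1 ^ 2 + (pd2 (pd1 ψ) (u, 0)).2.1 ^ 2
          - (pd2 (pd1 ψ) (u, 0)).2.2 ^ 2)
        + (((pd1 ψ (u, v)).1 - v * (pd2 (pd1 ψ) (u, 0)).1)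
            * ((pd1 ψ (u, v)).1 + v * (pd2 (pd1 ψ) (u, 0)).1)
          + ((pd1 ψ (u, v)).2.1 - v * (pd2 (pd1 ψ) (u, 0)).2.1)
            * ((pd1 ψ (u, v)).2.1 + v * (pd2 (pd1 ψ) (u, 0)).2.1)
          - ((pd1 ψ (u, v)).2.2 - v * (pd2 (pd1 ψ) (u, 0)).2.2)
            * ((pd1 ψ (u, v)).2.2 + v * (pd2 (pd1 ψ) (u, 0)).2.2)) := by
      ring
    rw [hdecomp2, hlval]
    have w1 : |((pd1 ψ (u, v)).1 - v * (pd2 (pd1 ψ) (u, 0)).1)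
        * ((pd1 ψ (u, v)).1 + v * (pd2 (pd1 ψ) (u, 0)).1)| ≤ (ε * v) * (v * (2 * M + 1)) := by
      rw [abs_mul]
      exact mul_le_mul hr1 hga1 (abs_nonneg _) (by positivity)
    have w2 : |((pd1 ψ (u, v)).2.1 - v * (pd2 (pd1 ψ) (u, 0)).2.1)
        * ((pd1 ψ (u, v)).2.1 + v * (pd2 (pd1 ψ) (u, 0)).2.1)| ≤ (ε * v) * (v * (2 * M + 1)) := by
      rw [abs_mul]
      exact mul_le_mul hr2 hga2 (abs_nonneg _) (by positivity)
    have w3 : |((pd1 ψ (u, v)).2.2 - v * (pd2 (pd1 ψ) (u, 0)).2.2)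
        * ((pd1 ψ (u, v)).2.2 + v * (pd2 (pd1 ψ) (u, 0)).2.2)| ≤ (ε * v) * (v * (2 * M + 1)) := by
      rw [abs_mul]
      exact mul_le_mul hr3 hga3 (abs_nonneg _) (by positivity)
    have hsum2 : (ε * v) * (v * (2 * M + 1)) * 3 = v ^ 2 * (ε * (6 * M + 3)) := by ring
    have hpos2 : v ^ 2 * (ε * (6 * M + 3)) < v ^ 2 * m :=
      mul_lt_mul_of_pos_left hεm'' (by positivity)
    have hvA2 : v ^ 2 * m ≤ v ^ 2 * A u ^ 2 :=
      mul_le_mul_of_nonneg_left hmu (by positivity)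
    have e1 := (abs_le.1 w1).1
    have e2 := (abs_le.1 w2).1
    have e3 := (abs_le.1 w3).2
    linarith
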